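/- arXiv:1803.07676 — 2 statements merged into one kernel-verified Lean document; each statement's English description precedes it below -/
import Mathlib

section
/- Let X be an invertible object of a symmetric monoidal category C. Then there exists a morphism τ : 𝟙 ⟶ 𝟙 with τ ≫ τ = id_𝟙 such that the braiding on X is given by acting with τ through the left unitor: β_{X,X} = (λ_{X⊗X}).inv ≫ (τ ⊗ id_{X⊗X}) ≫ (λ_{X⊗X}).hom. -/
open CategoryTheory MonoidalCategory

section Aux
variable {C : Type*} [Category C] [MonoidalCategory C]

private theorem scalar_conj' (A : C) (i : A ≅ 𝟙_ C) (s : 𝟙_ C ⟶ 𝟙_ C) :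
    (λ_ A).inv ≫ (s ⊗ₘ 𝟙 A) ≫ (λ_ A).hom = i.hom ≫ s ≫ i.inv := by
  have h1 : (s ⊗ₘ 𝟙 A) ≫ (𝟙 (𝟙_ C) ⊗ₘ i.hom) = (𝟙 (𝟙_ C) ⊗ₘ i.hom) ≫ (s ⊗ₘ 𝟙 (𝟙_ C)) := by
    rw [tensorHom_comp_tensorHom, tensorHom_comp_tensorHom]; simp
  have h2 : (λ_ A).hom ≫ i.hom = (𝟙 (𝟙_ C) ⊗ₘ i.hom) ≫ (λ_ (𝟙_ C)).hom := by simp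
  have h3 : (s ⊗ₘ 𝟙 (𝟙_ C)) ≫ (λ_ (𝟙_ C)).hom = (λ_ (𝟙_ C)).hom ≫ s := by
    rw [unitors_equal]; simp
  rw [← cancel_mono i.hom]
  slice_lhs 3 4 => rw [h2]
  slice_lhs 2 3 => rw [h1]
  slice_lhs 3 4 => rw [h3]
  simp

private theorem scalar_whisker' (Z W : C) (s : 𝟙_ C ⟶ 𝟙_ C) :
    ((λ_ Z).inv ≫ (s ⊗ₘ 𝟙 Z) ≫ (λ_ Z).hom) ⊗ₘ 𝟙 W =
      (λ_ (Z ⊗ W)).inv ≫ (s ⊗ₘ 𝟙 (Z ⊗ W)) ≫ (λ_ (Z ⊗ W)).hom := by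
  have hlam : (λ_ (Z ⊗ W)).hom = (α_ (𝟙_ C) Z W).inv ≫ ((λ_ Z).hom ⊗ₘ 𝟙 W) := by simp
  have hnat : ((s ⊗ₘ 𝟙 Z) ⊗ₘ 𝟙 W) ≫ (α_ (𝟙_ C) Z W).hom
      = (α_ (𝟙_ C) Z W).hom ≫ (s ⊗ₘ 𝟙 (Z ⊗ W)) := by
    rw [← id_tensorHom_id, associator_naturality]
  have hinv : (λ_ (Z ⊗ W)).inv = ((λ_ Z).inv ⊗ₘ 𝟙 W) ≫ (α_ (𝟙_ C) Z W).hom := by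
    rw [← cancel_mono (λ_ (Z ⊗ W)).hom]; conv_rhs => rw [hlam]
    simp [← comp_tensor_id]
  conv_rhs => rw [hlam, hinv]
  slice_rhs 2 3 => rw [← hnat]
  simp [comp_tensor_id]

private theorem cancel_whisker' (W Z : C) (j : W ⊗ Z ≅ 𝟙_ C) {A B : C} (g h : A ⟶ B)
    (hg : g ⊗ₘ 𝟙 W = h ⊗ₘ 𝟙 W) : g = h := by
  have key : ∀ f : A ⟶ B, f = (ρ_ A).inv ≫ (𝟙 A ⊗ₘ j.inv) ≫ (α_ A W Z).inv ≫
      ((f ⊗ₘ 𝟙 W) ⊗ₘ 𝟙 Z) ≫ (α_ B W Z).hom ≫ (𝟙 B ⊗ₘ j.hom) ≫ (ρ_ B).hom := by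
    intro f
    have h1 : ((f ⊗ₘ 𝟙 W) ⊗ₘ 𝟙 Z) ≫ (α_ B W Z).hom = (α_ A W Z).hom ≫ (f ⊗ₘ 𝟙 (W ⊗ Z)) := by
      rw [← id_tensorHom_id, associator_naturality, id_tensorHom_id]
    have h2 : (f ⊗ₘ 𝟙 (W ⊗ Z)) ≫ (𝟙 B ⊗ₘ j.hom) = (𝟙 A ⊗ₘ j.hom) ≫ (f ⊗ₘ 𝟙 (𝟙_ C)) := by
      rw [tensorHom_comp_tensorHom, tensorHom_comp_tensorHom]; simp
    slice_rhs 4 5 => rw [h1]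
    slice_rhs 5 6 => rw [h2]
    simp [MonoidalCategory.tensorHom_def]
  rw [key g, key h, hg]

end Aux

/-- For an invertible object `X` of a symmetric monoidal category, the braiding
`β_{X,X}` is given by the action (through the left unitor) of an involutive
element `τ` of the endomorphism monoid of the unit. -/
theorem braiding_of_invertible {C : Type*} [Category C] [MonoidalCategory C]
    [SymmetricCategory C] (X Y : C) (e : X ⊗ Y ≅ 𝟙_ C) (e' : Y ⊗ X ≅ 𝟙_ C) :
    ∃ τ : 𝟙_ C ⟶ 𝟙_ C, τ ≫ τ = 𝟙 (𝟙_ C) ∧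
      (β_ X X).hom =
        (λ_ (X ⊗ X)).inv ≫ (τ ⊗ₘ 𝟙 (X ⊗ X)) ≫ (λ_ (X ⊗ X)).hom := by
  set Z := X ⊗ X
  set W := Y ⊗ Y
  -- iso (X⊗X)⊗(Y⊗Y) ≅ 𝟙
  let i : Z ⊗ W ≅ 𝟙_ C :=
    α_ X X W ≪≫ whiskerLeftIso X
      ((α_ X Y Y).symm ≪≫ whiskerRightIso e Y ≪≫ λ_ Y) ≪≫ e
  let j : W ⊗ Z ≅ 𝟙_ C :=
    α_ Y Y Z ≪≫ whiskerLeftIso Y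
      ((α_ Y X X).symm ≪≫ whiskerRightIso e' X ≪≫ λ_ X) ≪≫ e'
  set f := (β_ X X).hom with hf
  refine ⟨i.inv ≫ (f ⊗ₘ 𝟙 W) ≫ i.hom, ?_, ?_⟩
  · have hff : f ≫ f = 𝟙 Z := SymmetricCategory.symmetry X X
    calc (i.inv ≫ (f ⊗ₘ 𝟙 W) ≫ i.hom) ≫ i.inv ≫ (f ⊗ₘ 𝟙 W) ≫ i.hom
        = i.inv ≫ ((f ⊗ₘ 𝟙 W) ≫ (f ⊗ₘ 𝟙 W)) ≫ i.hom := by simp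
      _ = i.inv ≫ ((f ≫ f) ⊗ₘ 𝟙 W) ≫ i.hom := by rw [tensorHom_comp_tensorHom]; simp
      _ = 𝟙 (𝟙_ C) := by rw [hff]; simp [id_tensorHom_id]
  · apply cancel_whisker' W Z j
    rw [scalar_whisker', scalar_conj' (Z ⊗ W) i]
    simp
end

section
/- Let X be an invertible object of a symmetric monoidal category C. Then there exists a morphism τ : 𝟙 ⟶ 𝟙 with τ ≫ τ = id_𝟙 such that for all morphisms f, g : 𝟙 ⟶ X one has g ⊗ f = (f ⊗ g) ≫ (λ_{X⊗X}).inv ≫ (τ ⊗ id_{X⊗X}) ≫ (λ_{X⊗X}).hom; i.e., the two products of f and g agree up to the sign element τ, which depends only on X and not on f and g. -/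
open CategoryTheory MonoidalCategory

section
variable {C : Type*} [Category C] [MonoidalCategory C]

/-- Action of a scalar `τ : 𝟙 ⟶ 𝟙` on an object `A`. -/
private def scl (τ : 𝟙_ C ⟶ 𝟙_ C) (A : C) : A ⟶ A :=
  (λ_ A).inv ≫ τ ▷ A ≫ (λ_ A).hom

private lemma scl_natural (τ : 𝟙_ C ⟶ 𝟙_ C) {A B : C} (q : A ⟶ B) :
    scl τ A ≫ q = q ≫ scl τ B := by
  simp only [scl, Category.assoc]
  rw [← leftUnitor_naturality, ← whisker_exchange_assoc]
  simp

private lemma scl_unit (τ : 𝟙_ C ⟶ 𝟙_ C) : scl τ (𝟙_ C) = τ := by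
  simp [scl, unitors_equal, unitors_inv_equal]

private lemma scl_whiskerRight (τ : 𝟙_ C ⟶ 𝟙_ C) (A B : C) :
    scl τ A ▷ B = scl τ (A ⊗ B) := by
  simp only [scl, comp_whiskerRight, Category.assoc, leftUnitor_tensor_hom,
    leftUnitor_tensor_inv]
  simp [associator_inv_naturality_left_assoc]

/-- Right whiskering by an object isomorphic to the unit is injective. -/
private lemma whiskerRight_cancel_unit {A B D : C} (v : D ≅ 𝟙_ C)
    {f g : A ⟶ B} (h : f ▷ D = g ▷ D) : f = g := by
  have key : ∀ k : A ⟶ B,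
      k = (ρ_ A).inv ≫ A ◁ v.inv ≫ k ▷ D ≫ B ◁ v.hom ≫ (ρ_ B).hom := by
    intro k
    rw [whisker_exchange_assoc]
    simp [rightUnitor_naturality]
  rw [key f, key g, h]

/-- Right whiskering by a left-invertible object is injective. -/
private lemma whiskerRight_cancel {A B D E : C} (v : D ⊗ E ≅ 𝟙_ C)
    {f g : A ⟶ B} (h : f ▷ D = g ▷ D) : f = g := by
  apply whiskerRight_cancel_unit v
  rw [whiskerRight_tensor, whiskerRight_tensor, h]

end

/-- For an invertible object `X` of a symmetric monoidal category, the two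
products `f ⊗ g` and `g ⊗ f` of morphisms `f, g : 𝟙 ⟶ X` agree up to a sign
element `τ : 𝟙 ⟶ 𝟙` with `τ ≫ τ = 𝟙`, depending only on `X` (Dugger's sign
rule, `n = 1` case). -/
theorem dugger_sign_rule {C : Type*} [Category C] [MonoidalCategory C]
    [SymmetricCategory C] (X Y : C) (e : X ⊗ Y ≅ 𝟙_ C) (e' : Y ⊗ X ≅ 𝟙_ C) :
    ∃ τ : 𝟙_ C ⟶ 𝟙_ C, τ ≫ τ = 𝟙 (𝟙_ C) ∧
      ∀ f g : 𝟙_ C ⟶ X,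
        g ⊗ₘ f =
          (f ⊗ₘ g) ≫ (λ_ (X ⊗ X)).inv ≫ (τ ⊗ₘ 𝟙 (X ⊗ X)) ≫ (λ_ (X ⊗ X)).hom := by
  -- inverse isomorphisms for `X ⊗ X`
  let u : (X ⊗ X) ⊗ (Y ⊗ Y) ≅ 𝟙_ C :=
    α_ X X (Y ⊗ Y) ≪≫
      whiskerLeftIso X ((α_ X Y Y).symm ≪≫ whiskerRightIso e Y ≪≫ λ_ Y) ≪≫ e
  let v : (Y ⊗ Y) ⊗ (X ⊗ X) ≅ 𝟙_ C :=
    α_ Y Y (X ⊗ X) ≪≫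
      whiskerLeftIso Y ((α_ Y X X).symm ≪≫ whiskerRightIso e' X ≪≫ λ_ X) ≪≫ e'
  -- the sign element
  refine ⟨u.inv ≫ (β_ X X).hom ▷ (Y ⊗ Y) ≫ u.hom, ?_, ?_⟩
  · rw [Category.assoc, Category.assoc, ← Category.assoc u.hom,
      Iso.hom_inv_id, Category.id_comp, ← comp_whiskerRight_assoc,
      SymmetricCategory.symmetry]
    simp
  · intro f g
    set τ : 𝟙_ C ⟶ 𝟙_ C := u.inv ≫ (β_ X X).hom ▷ (Y ⊗ Y) ≫ u.hom with hτ
    have hscl : scl τ (X ⊗ X) = (β_ X X).hom := by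
      apply whiskerRight_cancel v
      rw [scl_whiskerRight]
      have h1 := scl_natural τ u.hom
      rw [scl_unit] at h1
      have h2 : scl τ ((X ⊗ X) ⊗ (Y ⊗ Y)) = (u.hom ≫ τ) ≫ u.inv := by
        rw [← h1]; simp
      rw [h2, hτ]
      simp
    have : (f ⊗ₘ g) ≫ (β_ X X).hom = g ⊗ₘ f := by
      rw [BraidedCategory.braiding_naturality, braiding_tensorUnit_left]
      simp [unitors_equal]
    have h3 : (λ_ (X ⊗ X)).inv ≫ τ ▷ (X ⊗ X) ≫ (λ_ (X ⊗ X)).hom =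
        (β_ X X).hom := hscl
    rw [tensorHom_id, h3, this]
end
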